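/- Let K be an imaginary quadratic field whose class number h(K) is odd. Then the discriminant of K belongs to P*₋, i.e., the discriminant of K is -4, -8, or -p for a prime p ≡ 3 (mod 4); equivalently, exactly one prime number ramifies in K/ℚ. -/

import Mathlib

open NumberField
open scoped nonZeroDivisors

section Generic

variable {R : Type*} [CommRing R] (b : Module.Basis (Fin 2) ℤ R) (hb : b 0 = 1)
  (t n : ℤ) (hsq : b 1 * b 1 = t • b 1 - n • (1 : R))
include hb

lemma repr_exists (α : R) : ∃ x y : ℤ, α = x • (1 : R) + y • b 1 := by
  refine ⟨b.repr α 0, b.repr α 1, ?_⟩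
  rw [← hb]
  have := b.sum_repr α
  rw [Fin.sum_univ_two] at this
  exact this.symm

lemma repr_unique {x y x' y' : ℤ} (h : x • (1 : R) + y • b 1 = x' • (1 : R) + y' • b 1) :
    x = x' ∧ y = y' := by
  have h' : (x - x') • b 0 + (y - y') • b 1 = 0 := by
    rw [hb, sub_smul, sub_smul]
    rw [← sub_eq_zero] at h
    linear_combination (norm := abel) h
  have h2 : b.repr ((x - x') • b 0 + (y - y') • b 1) = 0 := by rw [h']; simp
  rw [map_add, map_smul, map_smul, Module.Basis.repr_self, Module.Basis.repr_self] at h2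
  have h3 := DFunLike.congr_fun h2 0
  have h4 := DFunLike.congr_fun h2 1
  simp [Finsupp.single_apply] at h3 h4
  constructor <;> omega

include hsq in
lemma norm_formula (x y : ℤ) :
    Algebra.norm ℤ (x • (1 : R) + y • b 1) = x * x + t * x * y + n * y * y := by
  have hsq' : b 1 * b 1 = (t : R) * b 1 - (n : R) * 1 := by
    simpa [zsmul_eq_mul] using hsq
  rw [Algebra.norm_eq_matrix_det b, Matrix.det_fin_two]
  have e0 : (x • (1 : R) + y • b 1) * b 0 = x • b 0 + y • b 1 := by
    rw [hb]; ring
  have e1 : (x • (1 : R) + y • b 1) * b 1 = (-(n*y)) • b 0 + (x + t*y) • b 1 := by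
    rw [hb]
    simp only [zsmul_eq_mul, mul_one]
    push_cast
    linear_combination (y : R) * hsq'
  simp only [Algebra.leftMulMatrix_eq_repr_mul, e0, e1, map_add, map_smul,
    Module.Basis.repr_self]
  simp [Finsupp.single_apply]
  ring

include hsq in
lemma trace_theta : Algebra.trace ℤ R (b 1) = t := by
  rw [Algebra.trace_eq_matrix_trace b, Matrix.trace_fin_two]
  have e0 : b 1 * b 0 = 0 • b 0 + 1 • b 1 := by rw [hb]; ring
  have e1 : b 1 * b 1 = (-n) • b 0 + t • b 1 := by
    rw [hb, hsq]
    simp only [zsmul_eq_mul, mul_one]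
    push_cast
    ring
  simp only [Algebra.leftMulMatrix_eq_repr_mul, e0, e1, map_add, map_smul, Module.Basis.repr_self]
  simp [Finsupp.single_apply]

include hsq in
lemma discr_formula : Algebra.discr ℤ ⇑b = t * t - 4 * n := by
  classical
  have : Module.Free ℤ R := Module.Free.of_basis b
  have : Module.Finite ℤ R := Module.Finite.of_basis b
  have hrank : Module.finrank ℤ R = 2 := by
    rw [Module.finrank_eq_card_basis b, Fintype.card_fin]
  have htr1 : Algebra.trace ℤ R 1 = 2 := by
    have h := Algebra.trace_algebraMap (R := ℤ) (S := R) 1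
    rw [map_one, hrank] at h
    simpa using h
  have htrθ : Algebra.trace ℤ R (b 1) = t := trace_theta b hb t n hsq
  have htrθ2 : Algebra.trace ℤ R (b 1 * b 1) = t * t - 2 * n := by
    rw [hsq, map_sub, map_smul, map_smul, htrθ, htr1]
    simp only [smul_eq_mul]
    ring
  rw [Algebra.discr_def, Matrix.det_fin_two]
  simp only [Algebra.traceMatrix_apply, Algebra.traceForm_apply, hb, one_mul, mul_one]
  rw [htr1, htrθ, htrθ2]
  ring

end Generic

section Field2

variable (K : Type*) [Field K] [NumberField K]

lemma exists_nice_basis (hdeg : Module.finrank ℚ K = 2) :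
    ∃ b : Module.Basis (Fin 2) ℤ (𝓞 K), b 0 = 1 := by
  classical
  have h2 : Module.finrank ℤ (𝓞 K) = 2 := by
    rw [NumberField.RingOfIntegers.rank, hdeg]
  let e := Module.finBasisOfFinrankEq ℤ (𝓞 K) h2
  set a : ℤ := e.repr 1 0 with ha
  set c : ℤ := e.repr 1 1 with hc
  have h1 : (1 : 𝓞 K) = a • e 0 + c • e 1 := by
    have := e.sum_repr 1
    rw [Fin.sum_univ_two] at this
    exact this.symm
  -- gcd a c = 1
  have hg : IsCoprime a c := by
    rw [Int.isCoprime_iff_gcd_eq_one]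
    by_contra hg1
    set g : ℕ := Int.gcd a c with hgdef
    have hgne : g ≠ 0 := by
      intro h0
      have ha0 : a = 0 := Int.natAbs_eq_zero.mp (Nat.eq_zero_of_gcd_eq_zero_left (hgdef ▸ h0))
      have hc0 : c = 0 := Int.natAbs_eq_zero.mp (Nat.eq_zero_of_gcd_eq_zero_right (hgdef ▸ h0))
      rw [ha0, hc0] at h1
      simp at h1
    -- x with g • x = 1
    obtain ⟨a', ha'⟩ : (g : ℤ) ∣ a := Int.gcd_dvd_left _ _
    obtain ⟨c', hc'⟩ : (g : ℤ) ∣ c := Int.gcd_dvd_right _ _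
    set x : 𝓞 K := a' • e 0 + c' • e 1 with hx
    have hgx : (g : 𝓞 K) * x = 1 := by
      rw [hx, h1, ha', hc']
      simp only [zsmul_eq_mul]
      push_cast
      ring
    -- map to K, use integrally closed
    have hgK : ((g : ℚ) : K) ≠ 0 := by
      simp only [ne_eq, Rat.cast_eq_zero, Nat.cast_eq_zero]
      exact_mod_cast hgne
    have this : (g : 𝓞 K) * x = 1 → True := fun _ => trivial
    have hthis := congrArg (algebraMap (𝓞 K) K) hgx
    rw [map_mul, map_one] at hthis
    set q : ℚ := (g : ℚ)⁻¹ with hq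
    have hxK : (algebraMap (𝓞 K) K x) = algebraMap ℚ K q := by
      have hgcast : (algebraMap (𝓞 K) K) (g : 𝓞 K) = algebraMap ℚ K (g : ℚ) := by
        simp [map_natCast]
      rw [hgcast] at hthis
      have e1 : algebraMap (𝓞 K) K x = (algebraMap ℚ K (g : ℚ))⁻¹ :=
        eq_inv_of_mul_eq_one_left (by rw [mul_comm]; exact hthis)
      rw [e1, hq, map_inv₀]
    have hint : IsIntegral ℤ q := by
      rw [← isIntegral_algebraMap_iff (algebraMap ℚ K).injective, ← hxK]
      exact NumberField.RingOfIntegers.isIntegral_coe x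
    obtain ⟨y, hy⟩ := IsIntegrallyClosed.isIntegral_iff.mp hint
    -- y * g = 1 in ℚ
    have hyq : (y : ℚ) = q := by exact_mod_cast hy
    have hy1 : (y : ℚ) * (g : ℚ) = 1 := by
      rw [hyq, hq]
      field_simp
    have hy2 : y * (g : ℤ) = 1 := by exact_mod_cast hy1
    have hy3 : (g : ℤ) ∣ 1 := Dvd.intro_left y hy2
    have := Int.le_of_dvd one_pos hy3
    omega
  -- now build the basis
  obtain ⟨u, v, huv⟩ := hg
  have hdet : (Matrix.of ![![a, -v], ![c, u]]).det = 1 := by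
    simp [Matrix.det_fin_two]
    linear_combination huv
  have hunit : IsUnit (Matrix.of ![![a, -v], ![c, u]]).det := by
    rw [hdet]; exact isUnit_one
  let eq := Matrix.toLinearEquiv e (Matrix.of ![![a, -v], ![c, u]]) hunit
  refine ⟨e.map eq, ?_⟩
  rw [Module.Basis.map_apply]
  have : eq (e 0) = a • e 0 + c • e 1 := by
    show (Matrix.toLin e e (Matrix.of ![![a, -v], ![c, u]])) (e 0) = _
    rw [Matrix.toLin_self]
    rw [Fin.sum_univ_two]
    simp [Matrix.of_apply]
  rw [this, ← h1]

end Field2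

section Field3

variable {K : Type*} [Field K] [NumberField K]
  (b : Module.Basis (Fin 2) ℤ (𝓞 K)) (hb : b 0 = 1) (t n : ℤ)
  (hsq : b 1 * b 1 = t • b 1 - n • (1 : 𝓞 K))
include hb hsq

lemma discr_val : NumberField.discr K = t * t - 4 * n := by
  rw [← NumberField.discr_eq_discr K b, discr_formula b hb t n hsq]

lemma discr_negative (him : ∃ φ : K →+* ℂ, ∃ x : K, (φ x).im ≠ 0) :
    t * t - 4 * n < 0 := by
  by_contra hcon
  push_neg at hcon
  obtain ⟨φ, x, hx⟩ := him
  set Θ : ℂ := φ (algebraMap (𝓞 K) K (b 1)) with hΘdef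
  have hΘ : Θ * Θ = t * Θ - n := by
    have h1 := congrArg (fun z => φ (algebraMap (𝓞 K) K z)) hsq
    simp only [map_mul, map_sub, map_zsmul, map_one, zsmul_eq_mul] at h1
    push_cast at h1
    convert h1 using 2 <;> simp [hΘdef]
  -- (2Θ - t)² = d ≥ 0
  set w : ℂ := 2 * Θ - t with hw
  have hw2 : w ^ 2 = ((t * t - 4 * n : ℤ) : ℂ) := by
    rw [hw]
    push_cast
    linear_combination 4 * hΘ
  have hwim : w.im = 0 := by
    have h1 : (w ^ 2).im = 0 := by rw [hw2]; simp
    have h2 : (w ^ 2).re = ((t * t - 4 * n : ℤ) : ℝ) := by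
      rw [hw2]; simp
    rw [pow_two, Complex.mul_im] at h1
    rw [pow_two, Complex.mul_re] at h2
    have hd : (0 : ℝ) ≤ ((t * t - 4 * n : ℤ) : ℝ) := by exact_mod_cast hcon
    have h3 : w.re * w.im = 0 := by linarith
    rcases mul_eq_zero.mp h3 with h4 | h4
    · have h5 : w.im * w.im ≤ 0 := by rw [h4] at h2; nlinarith
      exact mul_self_eq_zero.mp (le_antisymm h5 (mul_self_nonneg w.im))
    · exact h4
  have hΘim : Θ.im = 0 := by
    have : w.im = 2 * Θ.im := by
      rw [hw]
      simp
    rw [this] at hwim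
    linarith
  have key : ∀ γ : 𝓞 K, (φ (algebraMap (𝓞 K) K γ)).im = 0 := by
    intro γ
    obtain ⟨x', y', hxy⟩ := repr_exists b hb γ
    rw [hxy]
    simp only [map_add, map_zsmul, map_one, zsmul_eq_mul]
    push_cast
    simp [Complex.add_im, Complex.mul_im, hΘim]
    exact Or.inr hΘim
  obtain ⟨α, β, hβ, rfl⟩ := IsFractionRing.div_surjective (A := 𝓞 K) x
  rw [map_div₀] at hx
  apply hx
  rw [Complex.div_im, key, key]
  simp

end Field3

section CG

variable {R : Type*} [CommRing R] [IsDomain R] [IsDedekindDomain R]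

lemma not_odd_card_classGroup (I : Ideal R) (c : R) (hc : c ≠ 0)
    (hII : I * I = Ideal.span {c}) (hnp : ¬ I.IsPrincipal) :
    ¬ Odd (Nat.card (ClassGroup R)) := by
  intro hodd
  have hI0 : I ∈ (Ideal R)⁰ := by
    rw [mem_nonZeroDivisors_iff_ne_zero]
    intro h0
    rw [h0, mul_zero] at hII
    exact hc (by
      have : c ∈ Ideal.span ({c} : Set R) := Ideal.subset_span rfl
      rw [← hII] at this
      simpa using this)
  set g := ClassGroup.mk0 (⟨I, hI0⟩ : (Ideal R)⁰) with hg
  have hg2 : g * g = 1 := by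
    rw [hg, ← MonoidHom.map_mul ClassGroup.mk0]
    have : (⟨I, hI0⟩ : (Ideal R)⁰) * ⟨I, hI0⟩ = ⟨I * I, mul_mem hI0 hI0⟩ := rfl
    rw [this]
    rw [ClassGroup.mk0_eq_one_iff]
    exact ⟨⟨c, hII⟩⟩
  have hg1 : g ≠ 1 := by
    rw [hg, Ne, ClassGroup.mk0_eq_one_iff]
    exact hnp
  haveI : Fact (Nat.Prime 2) := ⟨Nat.prime_two⟩
  have horder : orderOf g = 2 := orderOf_eq_prime (by rw [pow_two]; exact hg2) hg1
  have hdvd : (2 : ℕ) ∣ Nat.card (ClassGroup R) := horder ▸ orderOf_dvd_natCard g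
  rw [Nat.odd_iff] at hodd
  omega

lemma ideal_sq_eq (p : ℤ) (pR β γ : R) (hpR : pR = (p : R))
    (hγ : β * β = pR * γ)
    (hrep : ∃ A B C : R, A * (pR * pR) + B * (pR * β) + C * (β * β) = pR) :
    Ideal.span {pR, β} * Ideal.span {pR, β} = Ideal.span {pR} := by
  apply le_antisymm
  · rw [Ideal.mul_le]
    intro r hr s hs
    rw [Ideal.mem_span_pair] at hr hs
    obtain ⟨u, v, hr⟩ := hr
    obtain ⟨u', v', hs⟩ := hs
    rw [Ideal.mem_span_singleton]
    refine ⟨u * u' * pR + u * v' * β + v * u' * β + v * v' * γ, ?_⟩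
    rw [← hr, ← hs]
    linear_combination v * v' * hγ
  · rw [Ideal.span_singleton_le_iff_mem]
    obtain ⟨A, B, C, hABC⟩ := hrep
    have hpI : pR ∈ Ideal.span {pR, β} := Ideal.subset_span (Set.mem_insert _ _)
    have hβI : β ∈ Ideal.span {pR, β} :=
      Ideal.subset_span (Set.mem_insert_of_mem _ rfl)
    have hmem : A * (pR * pR) + B * (pR * β) + C * (β * β) ∈
        Ideal.span {pR, β} * Ideal.span {pR, β} := by
      refine Ideal.add_mem _ (Ideal.add_mem _ ?_ ?_) ?_
      · exact Ideal.mul_mem_left _ A (Ideal.mul_mem_mul hpI hpI)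
      · exact Ideal.mul_mem_left _ B (Ideal.mul_mem_mul hpI hβI)
      · exact Ideal.mul_mem_left _ C (Ideal.mul_mem_mul hβI hβI)
    rwa [hABC] at hmem

end CG
section Field4

variable {K : Type*} [Field K] [NumberField K]
  (b : Module.Basis (Fin 2) ℤ (𝓞 K)) (hb : b 0 = 1) (t n : ℤ)
  (hsq : b 1 * b 1 = t • b 1 - n • (1 : 𝓞 K))

include hsq in
lemma theta_rel : (algebraMap (𝓞 K) K (b 1)) * (algebraMap (𝓞 K) K (b 1))
    = (t : K) * (algebraMap (𝓞 K) K (b 1)) - (n : K) := by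
  have h1 := congrArg (algebraMap (𝓞 K) K) hsq
  simp only [map_mul, map_sub, map_zsmul, map_one, zsmul_eq_mul] at h1
  push_cast at h1 ⊢
  convert h1 using 2 <;> simp

include hb hsq in
lemma denom_contradiction (P r A B : ℤ) (hA : A * P = 2 * r - t)
    (hB : B * P ^ 2 = r ^ 2 - t * r + n) (hP : ¬ IsUnit P) (hP0 : P ≠ 0) : False := by
  set Θ : K := algebraMap (𝓞 K) K (b 1) with hΘdef
  have hΘ : Θ * Θ = (t : K) * Θ - (n : K) := theta_rel b t n hsq
  have hPK : (P : K) ≠ 0 := Int.cast_ne_zero.mpr hP0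
  set ξ : K := (Θ - (r : K)) / (P : K) with hξ
  have hA' : (A : K) * (P : K) = 2 * (r : K) - (t : K) := by exact_mod_cast hA
  have hB' : (B : K) * (P : K) ^ 2 = (r : K) ^ 2 - (t : K) * (r : K) + (n : K) := by
    exact_mod_cast hB
  have hPξ : (P : K) * ξ = Θ - (r : K) := by
    rw [hξ]; field_simp
  have hint : IsIntegral ℤ ξ := by
    refine ⟨Polynomial.X ^ 2 + (Polynomial.C A * Polynomial.X + Polynomial.C B), ?_, ?_⟩
    · exact Polynomial.monic_X_pow_add
        (lt_of_le_of_lt Polynomial.degree_linear_le (by norm_num))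
    · simp only [Polynomial.eval₂_add, Polynomial.eval₂_pow, Polynomial.eval₂_mul,
        Polynomial.eval₂_X, Polynomial.eval₂_C]
      have h2 : ((P : K) * ξ) ^ 2 + (A : K) * (P : K) * ((P : K) * ξ)
          + (B : K) * (P : K) ^ 2 = 0 := by
        rw [hPξ]
        linear_combination hΘ + (Θ - (r : K)) * hA' + hB'
      have key : ((P : K)) ^ 2 * (ξ ^ 2 + ((algebraMap ℤ K A) * ξ + algebraMap ℤ K B)) = 0 := by
        have : algebraMap ℤ K A = (A : K) := by simp
        rw [this]
        have : algebraMap ℤ K B = (B : K) := by simp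
        rw [this]
        linear_combination h2
      exact (mul_eq_zero.mp key).resolve_left (pow_ne_zero 2 hPK)
  obtain ⟨δ, hδ⟩ := IsIntegralClosure.isIntegral_iff (A := 𝓞 K) (R := ℤ) (B := K) |>.mp hint
  have hPδ : (P : 𝓞 K) * δ = b 1 - (r : 𝓞 K) := by
    apply NumberField.RingOfIntegers.coe_injective
    rw [map_mul, map_sub, map_intCast, map_intCast, hδ, hPξ]
  obtain ⟨x, y, hxy⟩ := repr_exists b hb δ
  have hL : (P : 𝓞 K) * δ = (P * x) • (1 : 𝓞 K) + (P * y) • b 1 := by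
    rw [hxy]
    simp only [zsmul_eq_mul]
    push_cast
    ring
  have hR : b 1 - (r : 𝓞 K) = (-r) • (1 : 𝓞 K) + (1 : ℤ) • b 1 := by
    simp only [zsmul_eq_mul]
    push_cast
    ring
  have := repr_unique b hb (x := P * x) (y := P * y) (x' := -r) (y' := 1)
    (by rw [← hL, ← hR, hPδ])
  exact hP (IsUnit.of_mul_eq_one (a := P) y this.2)

end Field4
section Field5

variable {K : Type*} [Field K] [NumberField K]
  (b : Module.Basis (Fin 2) ℤ (𝓞 K)) (hb : b 0 = 1) (t n : ℤ)
  (hsq : b 1 * b 1 = t • b 1 - n • (1 : 𝓞 K))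

include hb hsq in
lemma norm_gen (p : ℤ) (I : Ideal (𝓞 K)) (hII : I * I = Ideal.span {(p : 𝓞 K)})
    (hP : I.IsPrincipal) : ∃ x y : ℤ, (x * x + t * x * y + n * y * y) ^ 2 = p ^ 2 := by
  obtain ⟨α, hα⟩ := hP
  rw [hα, Ideal.submodule_span_eq, Ideal.span_singleton_mul_span_singleton] at hII
  obtain ⟨u, hu⟩ := Ideal.span_singleton_eq_span_singleton.mp hII
  obtain ⟨x, y, hxy⟩ := repr_exists b hb α
  refine ⟨x, y, ?_⟩
  have hNα : Algebra.norm ℤ α = x * x + t * x * y + n * y * y := by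
    rw [hxy]; exact norm_formula b hb t n hsq x y
  have hNp : Algebra.norm ℤ ((p : 𝓞 K)) = p * p := by
    have hcast : (p : 𝓞 K) = p • (1 : 𝓞 K) + (0 : ℤ) • b 1 := by
      simp [zsmul_eq_mul]
    rw [hcast, norm_formula b hb t n hsq p 0]
    ring
  have hNu : Algebra.norm ℤ ((u : 𝓞 K)) = 1 ∨ Algebra.norm ℤ ((u : 𝓞 K)) = -1 :=
    Int.isUnit_iff.mp (u.isUnit.map (Algebra.norm ℤ))
  have hmain := congrArg (Algebra.norm ℤ) hu
  rw [map_mul, map_mul, hNα, hNp] at hmain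
  set Q := x * x + t * x * y + n * y * y
  rcases hNu with h | h
  · rw [h, mul_one] at hmain
    linear_combination hmain
  · rw [h] at hmain
    nlinarith [sq_nonneg Q, sq_nonneg p, hmain]

end Field5
section IntHelpers

lemma prime_ne_sq (p x : ℤ) (hp : Prime p) : x * x ≠ p := by
  intro h
  have hdvd : p ∣ x := by
    refine hp.dvd_of_dvd_pow (n := 2) ?_
    rw [pow_two, h]
  obtain ⟨z, hz⟩ := hdvd
  have hcancel : p * (p * (z * z)) = p * 1 := by
    rw [mul_one]
    nth_rewrite 3 [← h]
    rw [hz]; ring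
  have h1 : p * (z * z) = 1 := mul_left_cancel₀ hp.ne_zero hcancel
  exact hp.not_unit (IsUnit.of_mul_eq_one (a := p) (z * z) h1)

lemma Q_eq_p (t n x y p : ℤ) (hneg : t * t - 4 * n < 0)
    (hQ : (x * x + t * x * y + n * y * y) ^ 2 = p ^ 2) (hp : 0 < p) :
    x * x + t * x * y + n * y * y = p := by
  set Q := x * x + t * x * y + n * y * y with hQdef
  have h4 : 4 * Q = (2 * x + t * y) ^ 2 + (4 * n - t * t) * y ^ 2 := by rw [hQdef]; ring
  have hQ0 : 0 ≤ Q := by nlinarith [sq_nonneg (2 * x + t * y), sq_nonneg y]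
  have hfac : (Q - p) * (Q + p) = 0 := by linear_combination hQ
  rcases mul_eq_zero.mp hfac with h | h
  · linarith
  · exfalso; linarith

lemma no_elem_norm (t n p : ℤ) (hneg : t * t - 4 * n < 0) (hp : Prime p) (hp0 : 0 < p)
    (hbig : 4 * p < 4 * n - t * t) :
    ∀ x y : ℤ, (x * x + t * x * y + n * y * y) ^ 2 ≠ p ^ 2 := by
  intro x y h
  have hQp := Q_eq_p t n x y p hneg h hp0
  have h4 : 4 * p = (2 * x + t * y) ^ 2 + (4 * n - t * t) * y ^ 2 := by
    linear_combination 4 * hQp.symm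
  by_cases hy : y = 0
  · subst hy
    exact prime_ne_sq p x hp (by linarith)
  · have hy2 : 1 ≤ y ^ 2 := by
      have := mul_self_pos.mpr hy
      nlinarith
    nlinarith [sq_nonneg (2 * x + t * y)]

end IntHelpers
/-- If `K` is an imaginary quadratic field with odd class number, then its discriminant
belongs to `P*₋`, i.e. it is `-4`, `-8`, or `-p` for a prime `p ≡ 3 (mod 4)`. -/
theorem stmt6 (K : Type*) [Field K] [NumberField K]
    (hdeg : Module.finrank ℚ K = 2)
    (him : ∃ φ : K →+* ℂ, ∃ x : K, (φ x).im ≠ 0)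
    (hodd : Odd (Nat.card (ClassGroup (𝓞 K)))) :
    NumberField.discr K = -4 ∨ NumberField.discr K = -8 ∨
      ∃ p : ℕ, p.Prime ∧ p % 4 = 3 ∧ NumberField.discr K = -(p : ℤ) := by
  obtain ⟨b, hb⟩ := exists_nice_basis K hdeg
  obtain ⟨mx, my, hm⟩ := repr_exists b hb (b 1 * b 1)
  set t : ℤ := my with htdef
  set n : ℤ := -mx with hndef
  have hsq : b 1 * b 1 = t • b 1 - n • (1 : 𝓞 K) := by
    rw [hm, hndef]
    simp only [zsmul_eq_mul]
    push_cast
    ring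
  have hsq' : b 1 * b 1 = (t : 𝓞 K) * b 1 - (n : 𝓞 K) := by
    simpa [zsmul_eq_mul] using hsq
  have hd : NumberField.discr K = t * t - 4 * n := discr_val b hb t n hsq
  have hneg : t * t - 4 * n < 0 := discr_negative b hb t n hsq him
  -- no odd prime square divides the discriminant
  have hnosq : ∀ p : ℤ, Prime p → Odd p → ¬ ((p ^ 2 : ℤ) ∣ t * t - 4 * n) := by
    intro p hp hpodd hdvd
    obtain ⟨k, hk⟩ := hpodd
    set r : ℤ := t * (2 * k ^ 2 + 2 * k + 1) with hr
    have hA : (t * p) * p = 2 * r - t := by rw [hr, hk]; ring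
    have h4 : 4 * (r ^ 2 - t * r + n) = (t * p * p) ^ 2 - (t * t - 4 * n) := by
      rw [hr, hk]; ring
    have hdvd4 : (p ^ 2 : ℤ) ∣ 4 * (r ^ 2 - t * r + n) := by
      rw [h4]
      exact dvd_sub ⟨t ^ 2 * p ^ 2, by ring⟩ hdvd
    have hcop : IsCoprime ((p : ℤ) ^ 2) 4 :=
      ⟨p ^ 2, -(((2 * k ^ 2 + 2 * k) ^ 2 + (2 * k ^ 2 + 2 * k))), by rw [hk]; ring⟩
    obtain ⟨B, hB⟩ : (p ^ 2 : ℤ) ∣ (r ^ 2 - t * r + n) := hcop.dvd_of_dvd_mul_left hdvd4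
    exact denom_contradiction b hb t n hsq p r (t * p) B hA (by linear_combination hB.symm)
      hp.not_unit hp.ne_zero
  rcases Int.even_or_odd t with ht | ht
  · -- t even, discriminant -4m
    obtain ⟨s, hs⟩ := ht
    set m : ℤ := n - s ^ 2 with hmdef
    have ht2 : t * t = 4 * s ^ 2 := by rw [hs]; ring
    have hm0 : 0 < m := by rw [hmdef]; linarith
    have hdm : t * t - 4 * n = -(4 * m) := by rw [hmdef, hs]; ring
    -- m is not 3 mod 4 and not 0 mod 4
    have hm3 : ¬ (m % 4 = 3) := by
      intro h3
      obtain ⟨B, hB⟩ : (4 : ℤ) ∣ m + 1 := by omega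
      refine denom_contradiction b hb t n hsq 2 (s - 1) (-1) B (by rw [hs]; ring) ?_ ?_ two_ne_zero
      · have : (s - 1) ^ 2 - t * (s - 1) + n = m + 1 := by rw [hmdef, hs]; ring
        rw [this, hB]; ring
      · intro hu
        rcases Int.isUnit_iff.mp hu with h | h <;> omega
    have hm4 : ¬ (m % 4 = 0) := by
      intro h0
      obtain ⟨B, hB⟩ : (4 : ℤ) ∣ m := by omega
      refine denom_contradiction b hb t n hsq 2 s 0 B (by rw [hs]; ring) ?_ ?_ two_ne_zero
      · have : s ^ 2 - t * s + n = m := by rw [hmdef, hs]; ring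
        rw [this, hB]; ring
      · intro hu
        rcases Int.isUnit_iff.mp hu with h | h <;> omega
    by_cases hsmall : m ≤ 2
    · -- m = 1 or 2
      have : m = 1 ∨ m = 2 := by omega
      rcases this with h1 | h2
      · left; rw [hd, hdm, h1]; ring
      · right; left; rw [hd, hdm, h2]; ring
    · -- m ≥ 3 : even class number, contradiction
      exfalso
      push_neg at hsmall
      have hprime2 : Prime (2 : ℤ) := Int.prime_two
      have hbig : 4 * 2 < 4 * n - t * t := by
        have : 4 * n - t * t = 4 * m := by rw [hmdef, hs]; ring
        omega
      have hnonorm := no_elem_norm t n 2 hneg hprime2 (by norm_num) hbig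
      have hcast2 : ((2 : ℤ) : 𝓞 K) = (2 : 𝓞 K) := by push_cast; rfl
      have hm12 : m % 4 = 1 ∨ m % 4 = 2 := by omega
      rcases hm12 with hmo | hme
      · -- m ≡ 1 mod 4 : I = (2, 1 - s + θ)
        obtain ⟨w, hw⟩ : (4 : ℤ) ∣ m - 1 := by omega
        have hw' : m = 4 * w + 1 := by omega
        set β : 𝓞 K := ((1 - s : ℤ) : 𝓞 K) + b 1 with hβ
        set γ : 𝓞 K := ((-2 * w - s : ℤ) : 𝓞 K) + b 1 with hγdef
        have hnK : (n : 𝓞 K) = (s : 𝓞 K) ^ 2 + 4 * (w : 𝓞 K) + 1 := by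
          have : n = s ^ 2 + 4 * w + 1 := by rw [hmdef] at hw'; linarith
          exact_mod_cast this
        have htK : (t : 𝓞 K) = (s : 𝓞 K) + (s : 𝓞 K) := by exact_mod_cast hs
        have hγ : β * β = ((2 : ℤ) : 𝓞 K) * γ := by
          rw [hβ, hγdef]
          push_cast
          linear_combination hsq' + (b 1) * htK - hnK
        have hrep : ∃ A B C : 𝓞 K,
            A * (((2 : ℤ) : 𝓞 K) * ((2 : ℤ) : 𝓞 K)) + B * (((2 : ℤ) : 𝓞 K) * β)
              + C * (β * β) = ((2 : ℤ) : 𝓞 K) := by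
          refine ⟨((-w : ℤ) : 𝓞 K), 1, -1, ?_⟩
          rw [hβ]
          push_cast
          linear_combination -hsq' - (b 1) * htK + hnK
        have hII := ideal_sq_eq (R := 𝓞 K) 2 ((2 : ℤ) : 𝓞 K) β γ rfl hγ hrep
        have hnp : ¬ (Ideal.span {((2 : ℤ) : 𝓞 K), β}).IsPrincipal := by
          intro hP
          obtain ⟨x, y, hxy⟩ := norm_gen b hb t n hsq 2 _ hII hP
          exact hnonorm x y hxy
        exact not_odd_card_classGroup _ ((2 : ℤ) : 𝓞 K)
          (Int.cast_ne_zero.mpr two_ne_zero) hII hnp hodd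
      · -- m ≡ 2 mod 4 : I = (2, θ - s)
        obtain ⟨w, hw⟩ : (4 : ℤ) ∣ m - 2 := by omega
        have hw' : m = 4 * w + 2 := by omega
        set β : 𝓞 K := ((-s : ℤ) : 𝓞 K) + b 1 with hβ
        set γ : 𝓞 K := ((-(2 * w + 1) : ℤ) : 𝓞 K) with hγdef
        have hnK : (n : 𝓞 K) = (s : 𝓞 K) ^ 2 + 4 * (w : 𝓞 K) + 2 := by
          have : n = s ^ 2 + 4 * w + 2 := by rw [hmdef] at hw'; linarith
          exact_mod_cast this
        have htK : (t : 𝓞 K) = (s : 𝓞 K) + (s : 𝓞 K) := by exact_mod_cast hs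
        have hγ : β * β = ((2 : ℤ) : 𝓞 K) * γ := by
          rw [hβ, hγdef]
          push_cast
          linear_combination hsq' + (b 1) * htK - hnK
        have hrep : ∃ A B C : 𝓞 K,
            A * (((2 : ℤ) : 𝓞 K) * ((2 : ℤ) : 𝓞 K)) + B * (((2 : ℤ) : 𝓞 K) * β)
              + C * (β * β) = ((2 : ℤ) : 𝓞 K) := by
          refine ⟨((-w : ℤ) : 𝓞 K), 0, -1, ?_⟩
          rw [hβ]
          push_cast
          linear_combination -hsq' - (b 1) * htK + hnK
        have hII := ideal_sq_eq (R := 𝓞 K) 2 ((2 : ℤ) : 𝓞 K) β γ rfl hγ hrep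
        have hnp : ¬ (Ideal.span {((2 : ℤ) : 𝓞 K), β}).IsPrincipal := by
          intro hP
          obtain ⟨x, y, hxy⟩ := norm_gen b hb t n hsq 2 _ hII hP
          exact hnonorm x y hxy
        exact not_odd_card_classGroup _ ((2 : ℤ) : 𝓞 K)
          (Int.cast_ne_zero.mpr two_ne_zero) hII hnp hodd
  · -- t odd
    obtain ⟨k, hk⟩ := ht
    set D : ℤ := 4 * n - t * t with hD
    have hD0 : 0 < D := by rw [hD]; linarith
    have ht2 : t * t = 4 * (k * k + k) + 1 := by rw [hk]; ring
    have hDval : D = 4 * (n - (k * k + k)) - 1 := by rw [hD]; linarith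
    have hD4 : D % 4 = 3 := by omega
    have hDd : t * t - 4 * n = -D := by rw [hD]; ring
    set N : ℕ := D.toNat with hN
    have hDN : (N : ℤ) = D := Int.toNat_of_nonneg (le_of_lt hD0)
    by_cases hNp : N.Prime
    · right; right
      refine ⟨N, hNp, by omega, ?_⟩
      rw [hd, hDd, ← hDN]
    · exfalso
      have hN3 : 3 ≤ N := by omega
      have hNodd : N % 2 = 1 := by omega
      set p := N.minFac with hpdef
      have hpp : p.Prime := Nat.minFac_prime (by omega)
      obtain ⟨M, hM⟩ : p ∣ N := Nat.minFac_dvd N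
      have hM1 : M ≠ 1 := by
        intro h1; rw [h1, mul_one] at hM; exact hNp (hM ▸ hpp)
      have hM0 : M ≠ 0 := by
        intro h0; rw [h0, mul_zero] at hM; omega
      set q := M.minFac with hqdef
      have hqq : q.Prime := Nat.minFac_prime hM1
      have hqdvdM : q ∣ M := Nat.minFac_dvd M
      have hqdvd : q ∣ N := hqdvdM.trans ⟨p, by rw [hM]; ring⟩
      have hpodd : p % 2 = 1 := by
        rcases Nat.even_or_odd p with he | ho
        · exfalso
          obtain ⟨j, hj⟩ := he
          have : (2 : ℕ) ∣ N := ⟨j * M, by rw [hM, hj]; ring⟩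
          omega
        · exact Nat.odd_iff.mp ho
      have hqodd : q % 2 = 1 := by
        rcases Nat.even_or_odd q with he | ho
        · exfalso
          obtain ⟨j, hj⟩ := he
          obtain ⟨l, hl⟩ := hqdvd
          have : (2 : ℕ) ∣ N := ⟨j * l, by rw [hl, hj]; ring⟩
          omega
        · exact Nat.odd_iff.mp ho
      -- int versions
      have hPp : Prime ((p : ℤ)) := by
        rw [Int.prime_iff_natAbs_prime]
        simpa using hpp
      have hPodd : Odd ((p : ℤ)) := by
        rw [Int.odd_iff]
        omega
      have hne : q ≠ p := by
        intro he
        obtain ⟨M', hM'⟩ := he ▸ hqdvdM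
        apply hnosq (p : ℤ) hPp hPodd
        rw [hDd, dvd_neg, ← hDN]
        have : N = p * p * M' := by rw [hM, hM']; ring
        rw [this]
        push_cast
        exact ⟨(M' : ℤ), by ring⟩
      have hple : p ≤ q := Nat.minFac_le_of_dvd hqq.two_le hqdvd
      have hq2 : p + 2 ≤ q := by omega
      have hp3 : 3 ≤ p := by
        have := hpp.two_le
        omega
      have hpq : (p * q : ℕ) ∣ N :=
        Nat.Coprime.mul_dvd_of_dvd_of_dvd ((Nat.coprime_primes hpp hqq).mpr (by omega))
          ⟨M, hM⟩ hqdvd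
      have hNpq : (p * q : ℕ) ≤ N := Nat.le_of_dvd (by omega) hpq
      have hPdvdD : (p : ℤ) ∣ D := by
        rw [← hDN]
        exact Int.natCast_dvd_natCast.mpr ⟨M, hM⟩
      obtain ⟨e2, he2⟩ : ∃ e2 : ℤ, (p : ℤ) = 2 * e2 + 1 := ⟨((p : ℤ) - 1) / 2, by omega⟩
      set r : ℤ := t * (2 * e2 ^ 2 + 2 * e2 + 1) with hr
      have hA : (t * (p : ℤ)) * (p : ℤ) = 2 * r - t := by rw [hr, he2]; ring
      have h4 : 4 * (r ^ 2 - t * r + n) = (t * (p : ℤ) * (p : ℤ)) ^ 2 - (t * t - 4 * n) := by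
        rw [hr, he2]; ring
      have hPdvd4 : (p : ℤ) ∣ 4 * (r ^ 2 - t * r + n) := by
        rw [h4, hDd]
        exact dvd_sub ⟨t ^ 2 * (p : ℤ) ^ 3, by ring⟩ ((dvd_neg).mpr hPdvdD)
      have hcop4 : IsCoprime ((p : ℤ)) (4 : ℤ) := ⟨(p : ℤ), -(e2 ^ 2 + e2), by rw [he2]; ring⟩
      obtain ⟨c, hc⟩ : (p : ℤ) ∣ (r ^ 2 - t * r + n) := hcop4.dvd_of_dvd_mul_left hPdvd4
      have hPc : ¬ ((p : ℤ) ∣ c) := by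
        rintro ⟨c', hc'⟩
        apply hnosq (p : ℤ) hPp hPodd
        have h5 : t * t - 4 * n = (t * (p : ℤ) * (p : ℤ)) ^ 2 - 4 * (r ^ 2 - t * r + n) := by
          linarith
        rw [h5, hc, hc']
        exact dvd_sub ⟨t ^ 2 * (p : ℤ) ^ 2, by ring⟩ ⟨4 * c', by ring⟩
      obtain ⟨u, v, huv⟩ := (hPp.coprime_iff_not_dvd).mpr hPc
      -- the ideal (p, θ - r)
      set β : 𝓞 K := b 1 - (r : 𝓞 K) with hβ
      have hAK : ((t : 𝓞 K) * ((p : ℕ) : 𝓞 K)) * ((p : ℕ) : 𝓞 K)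
          = 2 * (r : 𝓞 K) - (t : 𝓞 K) := by exact_mod_cast hA
      have hcK : (r : 𝓞 K) ^ 2 - (t : 𝓞 K) * (r : 𝓞 K) + (n : 𝓞 K)
          = ((p : ℕ) : 𝓞 K) * (c : 𝓞 K) := by exact_mod_cast hc
      have huvK : (u : 𝓞 K) * ((p : ℕ) : 𝓞 K) + (v : 𝓞 K) * (c : 𝓞 K) = 1 := by
        exact_mod_cast huv
      have hγ : β * β = (((p : ℤ) : 𝓞 K))
          * (-((t : 𝓞 K) * (((p : ℤ) : 𝓞 K))) * β - (c : 𝓞 K)) := by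
        rw [hβ]
        push_cast at hAK hcK ⊢
        linear_combination hsq' + (b 1 - (r : 𝓞 K)) * hAK - hcK
      have hrep : ∃ A B C : 𝓞 K,
          A * ((((p : ℤ) : 𝓞 K)) * (((p : ℤ) : 𝓞 K))) + B * ((((p : ℤ) : 𝓞 K)) * β)
            + C * (β * β) = (((p : ℤ) : 𝓞 K)) := by
        refine ⟨(u : 𝓞 K), -((v : 𝓞 K) * (t : 𝓞 K) * (((p : ℤ) : 𝓞 K))), -(v : 𝓞 K), ?_⟩
        push_cast at huvK hγ ⊢
        linear_combination (-(v : 𝓞 K)) * hγ + (((p : ℕ) : 𝓞 K)) * huvK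
      have hII := ideal_sq_eq (R := 𝓞 K) ((p : ℤ)) (((p : ℤ) : 𝓞 K)) β
        (-((t : 𝓞 K) * (((p : ℤ) : 𝓞 K))) * β - (c : 𝓞 K)) rfl hγ hrep
      have hbig : 4 * (p : ℤ) < 4 * n - t * t := by
        have hcast : (p : ℤ) * (q : ℤ) ≤ D := by
          rw [← hDN]
          exact_mod_cast hNpq
        have h1 : (4 : ℤ) < (q : ℤ) := by omega
        have hp0 : (0 : ℤ) < (p : ℤ) := by omega
        have h2 : 4 * (p : ℤ) < (q : ℤ) * (p : ℤ) := mul_lt_mul_of_pos_right h1 hp0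
        have h3 : (q : ℤ) * (p : ℤ) = (p : ℤ) * (q : ℤ) := mul_comm _ _
        rw [hD] at hcast
        linarith
      have hnonorm := no_elem_norm t n (p : ℤ) hneg hPp (by omega) hbig
      have hnp : ¬ (Ideal.span {(((p : ℤ) : 𝓞 K)), β}).IsPrincipal := by
        intro hP
        obtain ⟨x, y, hxy⟩ := norm_gen b hb t n hsq (p : ℤ) _ hII hP
        exact hnonorm x y hxy
      exact not_odd_card_classGroup _ ((((p : ℤ) : 𝓞 K)))
        (Int.cast_ne_zero.mpr hPp.ne_zero) hII hnp hodd
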